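/- Let u_1, …, u_d ∈ ℤ^d be linearly independent integer vectors, let 0 ≤ k ≤ d, let C = {∑_{i=1}^d λ_i u_i : λ_1,…,λ_k > 0, λ_{k+1},…,λ_d ≥ 0} ⊆ ℝ^d be the associated half-open simplicial cone, and let Π = {∑_{i=1}^d λ_i u_i : λ_i ∈ (0,1] for 1 ≤ i ≤ k, λ_i ∈ [0,1) for k < i ≤ d} be its fundamental parallelepiped. Then for every α ∈ ℤ^d, the following identity holds in R[G]: ∑_{S ⊆ {1,…,d}} (−1)^{|S|} · [φ(∑_{i∈S} u_i)] · f(α − ∑_{i∈S} u_i) = (if α ∈ Π then [φ(α)] else 0), where f : ℤ^d → R[G] is defined by f(β) = [φ(β)] if β ∈ C and f(β) = 0 otherwise. (This is the coefficient of z^α in the identity ∏_{i=1}^d (1 − φ(u_i) z^{u_i}) · σ(C,φ;z) = σ(Π,φ;z) for the φ-integer point transform σ(C,φ;z) = ∑_{α ∈ C ∩ ℤ^d} φ(α) z^α.) -/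

import Mathlib

open scoped Classical

/-- Auxiliary: alternating sum over a powerset in any commutative ring. -/
lemma aux_sum_powerset_neg_one_pow_card {α : Type*} [DecidableEq α] (A : Finset α)
    {K : Type*} [CommRing K] :
    (∑ S ∈ A.powerset, (-1 : K) ^ S.card) = if A = ∅ then 1 else 0 := by
  have := Finset.sum_powerset_neg_one_pow_card (x := A)
  have h2 : ((∑ S ∈ A.powerset, (-1 : ℤ) ^ S.card : ℤ) : K)
      = ∑ S ∈ A.powerset, (-1 : K) ^ S.card := by push_cast; rfl
  rw [← h2, this]
  split <;> simp

/-- coefficientwise form of the rationality identity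
`∏ᵢ (1 − φ(uᵢ) z^{uᵢ}) · σ(C,φ;z) = σ(Π,φ;z)` for a half-open rational
simplicial cone `C` with fundamental parallelepiped `Π`. -/
theorem phi_integer_point_transform_coeff_identity
    {d : ℕ} {G : Type*} [CommGroup G] {R : Type*} [CommRing R]
    (u : Fin d → (Fin d → ℤ)) (k : ℕ) (hk : k ≤ d)
    (hu : LinearIndependent ℝ (fun i => (fun j => (u i j : ℝ))))
    (φ : (Fin d → ℤ) → G) (hφ : ∀ x y, φ (x + y) = φ x * φ y)
    (C : Set (Fin d → ℝ))
    (hC : C = {x | ∃ lam : Fin d → ℝ,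
        (∀ i : Fin d, (i : ℕ) < k → 0 < lam i) ∧
        (∀ i : Fin d, k ≤ (i : ℕ) → 0 ≤ lam i) ∧
        x = ∑ i, lam i • (fun j => (u i j : ℝ))})
    (Pp : Set (Fin d → ℝ))
    (hPp : Pp = {x | ∃ lam : Fin d → ℝ,
        (∀ i : Fin d, (i : ℕ) < k → lam i ∈ Set.Ioc (0 : ℝ) 1) ∧
        (∀ i : Fin d, k ≤ (i : ℕ) → lam i ∈ Set.Ico (0 : ℝ) 1) ∧
        x = ∑ i, lam i • (fun j => (u i j : ℝ))})
    (f : (Fin d → ℤ) → MonoidAlgebra R G)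
    (hf : ∀ β : Fin d → ℤ,
      f β = if (fun j => (β j : ℝ)) ∈ C then MonoidAlgebra.of R G (φ β) else 0)
    (α : Fin d → ℤ) :
    ∑ S : Finset (Fin d),
        (-1 : MonoidAlgebra R G) ^ S.card *
          MonoidAlgebra.of R G (φ (∑ i ∈ S, u i)) * f (α - ∑ i ∈ S, u i)
      = (if (fun j => (α j : ℝ)) ∈ Pp then MonoidAlgebra.of R G (φ α) else 0) := by
  classical
  set v : Fin d → (Fin d → ℝ) := fun i j => (u i j : ℝ) with hv
  haveI : FiniteDimensional ℝ (Fin d → ℝ) := inferInstance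
  have hspan : ⊤ ≤ Submodule.span ℝ (Set.range v) := by
    rw [hu.span_eq_top_of_card_eq_finrank' (by simp)]
  set b : Module.Basis (Fin d) ℝ (Fin d → ℝ) := Module.Basis.mk hu hspan with hbdef
  have hb : ∀ i, b i = v i := fun i => by simp [hbdef]
  have hrepr : ∀ lam : Fin d → ℝ, ∀ i, b.repr (∑ j, lam j • v j) i = lam i := by
    intro lam i
    have h : (∑ j, lam j • v j) = ∑ j, lam j • b j := by simp [hb]
    rw [h]
    rw [b.repr_sum_self]
  have hsum : ∀ x : Fin d → ℝ, x = ∑ j, b.repr x j • v j := by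
    intro x
    conv_lhs => rw [← b.sum_repr x]
    simp [hb]
  -- characterizations of membership
  have memC : ∀ x : Fin d → ℝ, x ∈ C ↔
      (∀ i : Fin d, (i : ℕ) < k → 0 < b.repr x i) ∧
      (∀ i : Fin d, k ≤ (i : ℕ) → 0 ≤ b.repr x i) := by
    intro x
    rw [hC]
    constructor
    · rintro ⟨lam, h1, h2, rfl⟩
      exact ⟨fun i hi => by rw [hrepr]; exact h1 i hi,
             fun i hi => by rw [hrepr]; exact h2 i hi⟩
    · rintro ⟨h1, h2⟩
      exact ⟨fun i => b.repr x i, h1, h2, hsum x⟩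
  have memP : ∀ x : Fin d → ℝ, x ∈ Pp ↔
      (∀ i : Fin d, (i : ℕ) < k → b.repr x i ∈ Set.Ioc (0 : ℝ) 1) ∧
      (∀ i : Fin d, k ≤ (i : ℕ) → b.repr x i ∈ Set.Ico (0 : ℝ) 1) := by
    intro x
    rw [hPp]
    constructor
    · rintro ⟨lam, h1, h2, rfl⟩
      exact ⟨fun i hi => by rw [hrepr]; exact h1 i hi,
             fun i hi => by rw [hrepr]; exact h2 i hi⟩
    · rintro ⟨h1, h2⟩
      exact ⟨fun i => b.repr x i, h1, h2, hsum x⟩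
  set aR : Fin d → ℝ := fun j => (α j : ℝ) with haR
  set L : Fin d → ℝ := fun i => b.repr aR i with hL
  -- coordinates of shifted points
  have hshiftvec : ∀ S : Finset (Fin d),
      (fun j => (((α - ∑ i ∈ S, u i) j : ℤ) : ℝ)) = aR - ∑ i ∈ S, v i := by
    intro S
    funext j
    simp only [Pi.sub_apply, Finset.sum_apply, haR, hv]
    push_cast
    ring
  have hshift : ∀ (S : Finset (Fin d)) (j : Fin d),
      b.repr (aR - ∑ i ∈ S, v i) j = L j - (if j ∈ S then 1 else 0) := by
    intro S j
    rw [map_sub, map_sum]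
    simp only [Finsupp.coe_sub, Pi.sub_apply, Finsupp.coe_finset_sum, Finset.sum_apply]
    congr 1
    have : ∀ i : Fin d, b.repr (v i) j = if i = j then 1 else 0 := by
      intro i
      rw [← hb, b.repr_self, Finsupp.single_apply]
    rw [Finset.sum_congr rfl (fun i _ => this i)]
    simp [Finset.sum_ite_eq, eq_comm]
  by_cases hbase : (∀ i : Fin d, (i : ℕ) < k → 0 < L i) ∧
      (∀ i : Fin d, k ≤ (i : ℕ) → 0 ≤ L i)
  · -- base conditions hold
    set A : Finset (Fin d) :=
      Finset.univ.filter (fun i => if (i : ℕ) < k then 1 < L i else 1 ≤ L i) with hA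
    have hmemA : ∀ i : Fin d, i ∈ A ↔ (if (i : ℕ) < k then 1 < L i else 1 ≤ L i) := by
      intro i; simp [hA]
    have hfS : ∀ S : Finset (Fin d),
        f (α - ∑ i ∈ S, u i) = if S ⊆ A then
          MonoidAlgebra.of R G (φ (α - ∑ i ∈ S, u i)) else 0 := by
      intro S
      rw [hf]
      congr 1
      rw [eq_iff_iff, hshiftvec S, memC]
      constructor
      · rintro ⟨h1, h2⟩ i hiS
        rw [hmemA]
        by_cases hik : (i : ℕ) < k
        · have := h1 i hik
          rw [hshift S i, if_pos hiS] at this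
          simp only [hik, if_pos]
          linarith
        · have := h2 i (le_of_not_gt hik)
          rw [hshift S i, if_pos hiS] at this
          simp only [hik, if_neg, if_false]
          linarith
      · intro hSA
        constructor
        · intro i hik
          rw [hshift S i]
          by_cases hiS : i ∈ S
          · have := (hmemA i).mp (hSA hiS)
            rw [if_pos hik] at this
            rw [if_pos hiS]; linarith
          · rw [if_neg hiS]
            have := hbase.1 i hik
            linarith
        · intro i hik
          rw [hshift S i]
          by_cases hiS : i ∈ S
          · have := (hmemA i).mp (hSA hiS)
            rw [if_neg (not_lt.mpr hik)] at this
            rw [if_pos hiS]; linarith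
          · rw [if_neg hiS]
            have := hbase.2 i hik
            linarith
    have hterm : ∀ S : Finset (Fin d),
        (-1 : MonoidAlgebra R G) ^ S.card *
          MonoidAlgebra.of R G (φ (∑ i ∈ S, u i)) * f (α - ∑ i ∈ S, u i)
        = if S ⊆ A then (-1 : MonoidAlgebra R G) ^ S.card *
            MonoidAlgebra.of R G (φ α) else 0 := by
      intro S
      rw [hfS S]
      split
      · have hadd : (∑ i ∈ S, u i) + (α - ∑ i ∈ S, u i) = α := by abel
        rw [mul_assoc, ← map_mul, ← hφ, hadd]
      · rw [mul_zero]
    rw [Finset.sum_congr rfl (fun S _ => hterm S)]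
    have hPow : (Finset.univ.filter (fun S : Finset (Fin d) => S ⊆ A)) = A.powerset := by
      ext S; simp [Finset.mem_powerset]
    rw [← Finset.sum_filter, hPow, ← Finset.sum_mul,
      aux_sum_powerset_neg_one_pow_card]
    have hAP : A = ∅ ↔ aR ∈ Pp := by
      rw [memP, Finset.eq_empty_iff_forall_notMem]
      constructor
      · intro h
        refine ⟨fun i hik => ⟨hbase.1 i hik, ?_⟩, fun i hik => ⟨hbase.2 i hik, ?_⟩⟩
        · have := h i
          rw [hmemA, if_pos hik] at this
          push_neg at this
          exact this
        · have := h i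
          rw [hmemA, if_neg (not_lt.mpr hik)] at this
          push_neg at this
          exact this
      · rintro ⟨h1, h2⟩ i hi
        rw [hmemA] at hi
        by_cases hik : (i : ℕ) < k
        · rw [if_pos hik] at hi
          have := (h1 i hik).2
          linarith
        · rw [if_neg hik] at hi
          have := (h2 i (not_lt.mp hik)).2
          linarith
    by_cases h0 : A = ∅
    · rw [if_pos h0, one_mul, if_pos (hAP.mp h0)]
    · rw [if_neg h0, zero_mul, if_neg (fun hp => h0 (hAP.mpr hp))]
  · -- some base condition fails: both sides are zero
    have hP0 : aR ∉ Pp := by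
      intro hp
      rw [memP] at hp
      exact hbase ⟨fun i hik => (hp.1 i hik).1, fun i hik => (hp.2 i hik).1⟩
    rw [if_neg hP0]
    apply Finset.sum_eq_zero
    intro S _
    have hfz : f (α - ∑ i ∈ S, u i) = 0 := by
      rw [hf, if_neg]
      rw [hshiftvec S, memC]
      rintro ⟨h1, h2⟩
      apply hbase
      constructor
      · intro i hik
        have := h1 i hik
        rw [hshift S i] at this
        by_cases hiS : i ∈ S
        · rw [if_pos hiS] at this; linarith
        · rw [if_neg hiS] at this; linarith
      · intro i hik
        have := h2 i hik
        rw [hshift S i] at this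
        by_cases hiS : i ∈ S
        · rw [if_pos hiS] at this; linarith
        · rw [if_neg hiS] at this; linarith
    rw [hfz, mul_zero]
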